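/- Let u^c ∈ [0,1]^{N×T} with N ≥ 2 and let u^b be the output of sum-up rounding. For a bounded Hamiltonian family H_k(u) = H⁽⁰⁾ + ∑_j u_{jk} H⁽ʲ⁾, suppose the cumulative control deviations satisfy ‖∑_{τ=1}^k (u^c_τ − u^b_τ)Δt‖_∞ → 0 uniformly in k as Δt → 0 with TΔt = t_f fixed. Then the final evolved operators converge: lim_{Δt→0} X^b_T = lim_{Δt→0} X^c_T, where X_T = ∏_{k=T}^{1} exp(−i H_k Δt) X_0 (product in decreasing order of k), provided both limits exist. Consequently, for any continuous objective F, lim_{Δt→0} F(X^b_T) = lim_{Δt→0} F(X^c_T). -/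

import Mathlib

open Finset Matrix

/-- The controller selected by sum-up rounding at time step `k` (0-indexed). -/
noncomputable def surSel (N : ℕ) (Δt : ℝ) (uc : ℕ → ℕ → ℝ) : ℕ → ℕ := fun k =>
  Nat.strongRecOn k (fun n ih =>
    let ub : ℕ → ℕ → ℝ := fun j τ => if h : τ < n then (if ih τ h = j then 1 else 0) else 0
    let phat : ℕ → ℝ := fun j =>
      (∑ τ ∈ Finset.range (n + 1), uc j τ * Δt) - ∑ τ ∈ Finset.range n, ub j τ * Δt
    ((Finset.range N).filter (fun j => ∀ j' ∈ Finset.range N, phat j' ≤ phat j)).min.getD 0)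

/-- The binary controls produced by sum-up rounding. -/
noncomputable def surRound (N : ℕ) (Δt : ℝ) (uc : ℕ → ℕ → ℝ) : ℕ → ℕ → ℝ :=
  fun j k => if surSel N Δt uc k = j then 1 else 0



section Infra

variable {𝔸 : Type*} [NormedRing 𝔸] [NormOneClass 𝔸] [NormedAlgebra ℂ 𝔸] [CompleteSpace 𝔸]

theorem my_exp_tail_norm_le (x : 𝔸) (k : ℕ) :
    ‖NormedSpace.exp x - ∑ i ∈ Finset.range k, ((i.factorial : ℂ)⁻¹ • x ^ i)‖
      ≤ ‖x‖ ^ k * Real.exp ‖x‖ := by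
  have h : HasSum (fun n : ℕ => ((n.factorial : ℂ)⁻¹ • x ^ n)) (NormedSpace.exp x) := by
    simpa using NormedSpace.exp_series_hasSum_exp' (𝕂 := ℂ) x
  have h2 : HasSum (fun n : ℕ => (((n + k).factorial : ℂ)⁻¹ • x ^ (n + k)))
      (NormedSpace.exp x - ∑ i ∈ Finset.range k, ((i.factorial : ℂ)⁻¹ • x ^ i)) :=
    (hasSum_nat_add_iff' k).mpr h
  have hle : ∀ n : ℕ, ‖(((n + k).factorial : ℂ)⁻¹ • x ^ (n + k))‖
      ≤ ‖x‖ ^ k * (‖x‖ ^ n / n.factorial) := by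
    intro n
    rw [norm_smul]
    have h1 : ‖((n + k).factorial : ℂ)⁻¹‖ = ((n + k).factorial : ℝ)⁻¹ := by
      rw [norm_inv]; norm_num
    rw [h1]
    calc ((n + k).factorial : ℝ)⁻¹ * ‖x ^ (n + k)‖
        ≤ ((n + k).factorial : ℝ)⁻¹ * ‖x‖ ^ (n + k) := by
          apply mul_le_mul_of_nonneg_left (norm_pow_le _ _) (by positivity)
      _ ≤ (n.factorial : ℝ)⁻¹ * ‖x‖ ^ (n + k) := by
          apply mul_le_mul_of_nonneg_right _ (by positivity)
          apply inv_anti₀ (by positivity)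
          exact_mod_cast Nat.factorial_le (Nat.le_add_right n k)
      _ = ‖x‖ ^ k * (‖x‖ ^ n / n.factorial) := by ring
  have hre : HasSum (fun n : ℕ => ‖x‖ ^ n / n.factorial) (Real.exp ‖x‖) := by
    rw [Real.exp_eq_exp_ℝ]
    exact NormedSpace.expSeries_div_hasSum_exp ‖x‖
  exact h2.norm_le_of_bounded (hre.mul_left _) hle

theorem my_norm_exp_le (x : 𝔸) : ‖NormedSpace.exp x‖ ≤ Real.exp ‖x‖ := by
  simpa using my_exp_tail_norm_le x 0

theorem my_norm_exp_sub_one_le (x : 𝔸) :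
    ‖NormedSpace.exp x - 1‖ ≤ ‖x‖ * Real.exp ‖x‖ := by
  have := my_exp_tail_norm_le x 1
  simpa using this

theorem my_norm_exp_sub_one_sub_le (x : 𝔸) :
    ‖NormedSpace.exp x - 1 - x‖ ≤ ‖x‖ ^ 2 * Real.exp ‖x‖ := by
  have := my_exp_tail_norm_le x 2
  rw [Finset.sum_range_succ, Finset.sum_range_one] at this
  simpa [sub_sub] using this

theorem my_norm_list_prod_le {r : ℝ} : ∀ (l : List 𝔸), (∀ x ∈ l, ‖x‖ ≤ r) →
    ‖l.prod‖ ≤ r ^ l.length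
  | [], _ => by simp
  | a :: l, h => by
    have hr : 0 ≤ r := le_trans (norm_nonneg a) (h a (by simp))
    calc ‖(a :: l).prod‖ = ‖a * l.prod‖ := by simp
      _ ≤ ‖a‖ * ‖l.prod‖ := norm_mul_le _ _
      _ ≤ r * r ^ l.length := by
          apply mul_le_mul (h a (by simp)) (my_norm_list_prod_le l (fun x hx => h x (by simp [hx])))
            (norm_nonneg _) hr
      _ = r ^ (a :: l).length := by rw [List.length_cons, pow_succ']

/-- Decreasing-index product of `f` over `[k, T)`. -/
noncomputable def pexp (f : ℕ → 𝔸) (k T : ℕ) : 𝔸 := ((List.range' k (T - k)).reverse.map f).prod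

theorem pexp_self (f : ℕ → 𝔸) (T : ℕ) : pexp f T T = 1 := by simp [pexp]

theorem pexp_succ_left (f : ℕ → 𝔸) {k T : ℕ} (h : k < T) :
    pexp f k T = pexp f (k + 1) T * f k := by
  have h1 : T - k = (T - (k + 1)) + 1 := by omega
  rw [pexp, pexp, h1, List.range'_succ]
  simp

theorem pexp_succ_right (f : ℕ → 𝔸) {k T : ℕ} (h : k ≤ T) :
    pexp f k (T + 1) = f T * pexp f k T := by
  have h1 : T + 1 - k = (T - k) + 1 := by omega
  have h2 : k + 1 * (T - k) = T := by omega
  rw [pexp, pexp, h1, List.range'_concat, h2]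
  simp

theorem pexp_zero (f : ℕ → 𝔸) (T : ℕ) :
    pexp f 0 T = ((List.range T).reverse.map f).prod := by
  rw [pexp, List.range_eq_range']
  simp

theorem norm_pexp_le {f : ℕ → 𝔸} {r : ℝ} {k T m : ℕ} (hr : 1 ≤ r) (hm : T ≤ m)
    (h : ∀ l, ‖f l‖ ≤ r) : ‖pexp f k T‖ ≤ r ^ m := by
  have := my_norm_list_prod_le ((List.range' k (T - k)).reverse.map f)
    (by intro x hx; simp only [List.mem_map] at hx; obtain ⟨l, -, rfl⟩ := hx; exact h l)
  refine le_trans this ?_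
  rw [List.length_map, List.length_reverse, List.length_range']
  exact pow_le_pow_right₀ hr (by omega)

end Infra

/-- Abel summation with cumulative sums on the coefficients. -/
theorem my_abel {M : Type*} [AddCommGroup M] [Module ℂ M] (c : ℕ → ℂ) (W : ℕ → M) :
    ∀ T : ℕ, ∑ k ∈ range (T + 1), c k • W k =
      (∑ τ ∈ range (T + 1), c τ) • W T
        + ∑ k ∈ range T, (∑ τ ∈ range (k + 1), c τ) • (W k - W (k + 1))
  | 0 => by simp
  | (T + 1) => by
    rw [Finset.sum_range_succ (f := fun k => c k • W k), my_abel c W T,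
      Finset.sum_range_succ (f := fun k => (∑ τ ∈ range (k + 1), c τ) • (W k - W (k + 1))),
      Finset.sum_range_succ (f := c) (n := T + 1)]
    rw [smul_sub, add_smul]
    abel

set_option linter.unusedSectionVars false
set_option maxHeartbeats 1000000

section Key

variable {𝔸 : Type*} [NormedRing 𝔸] [NormOneClass 𝔸] [NormedAlgebra ℂ 𝔸] [CompleteSpace 𝔸]

theorem key_bound (H0 : 𝔸) (Hc : ℕ → 𝔸) (N T : ℕ) (hT : 1 ≤ T) (Δ : ℝ) (hΔ : 0 < Δ)
    (a b : ℕ → ℕ → ℝ) (ha : ∀ j k, |a j k| ≤ 1) (hb : ∀ j k, |b j k| ≤ 1)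
    (X0 : 𝔸) (C : ℝ) (hC : C = ‖H0‖ + ∑ j ∈ range N, ‖Hc j‖) (hΔC : Δ * C ≤ 1)
    (δ : ℝ) (hδ : 0 ≤ δ)
    (hdev : ∀ k < T, ∀ j < N, |∑ τ ∈ range (k + 1), (a j τ - b j τ) * Δ| ≤ δ) :
    ‖pexp (fun k => NormedSpace.exp ((-(Complex.I * (Δ : ℂ))) •
          (H0 + ∑ j ∈ range N, (b j k : ℂ) • Hc j))) 0 T * X0
      - pexp (fun k => NormedSpace.exp ((-(Complex.I * (Δ : ℂ))) •
          (H0 + ∑ j ∈ range N, (a j k : ℂ) • Hc j))) 0 T * X0‖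
      ≤ (Real.exp (Δ * C)) ^ T * ((Real.exp (Δ * C)) ^ T * ‖X0‖) *
          (6 * C ^ 2 * Δ ^ 2 * T + N * (δ * (C * (1 + 6 * (C * (Δ * T)))))) := by
  have hC0 : 0 ≤ C := by
    rw [hC]; positivity
  obtain ⟨S, rfl⟩ : ∃ S, T = S + 1 := ⟨T - 1, by omega⟩
  set Am : ℕ → 𝔸 := fun k => (-(Complex.I * (Δ : ℂ))) •
    (H0 + ∑ j ∈ range N, (a j k : ℂ) • Hc j) with hAm
  set Bm : ℕ → 𝔸 := fun k => (-(Complex.I * (Δ : ℂ))) •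
    (H0 + ∑ j ∈ range N, (b j k : ℂ) • Hc j) with hBm
  set eA : ℕ → 𝔸 := fun k => NormedSpace.exp (Am k) with heA
  set eB : ℕ → 𝔸 := fun k => NormedSpace.exp (Bm k) with heB
  set U : ℕ → 𝔸 := fun k => pexp eB k (S + 1) with hU
  set V : ℕ → 𝔸 := fun k => pexp eA 0 k * X0 with hV
  set E : ℝ := (Real.exp (Δ * C)) ^ (S + 1) with hE
  -- norm of the scalar
  have hIΔ : ‖(-(Complex.I * (Δ : ℂ)))‖ = Δ := by
    simp [abs_of_pos hΔ]
  -- norm bounds on the Hamiltonians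
  have hHam : ∀ (u : ℕ → ℕ → ℝ), (∀ j k, |u j k| ≤ 1) → ∀ k,
      ‖H0 + ∑ j ∈ range N, (u j k : ℂ) • Hc j‖ ≤ C := by
    intro u hu k
    rw [hC]
    refine (norm_add_le _ _).trans (add_le_add_right ?_ _)
    refine (norm_sum_le _ _).trans (Finset.sum_le_sum fun j _ => ?_)
    rw [norm_smul, Complex.norm_real, Real.norm_eq_abs]
    calc |u j k| * ‖Hc j‖ ≤ 1 * ‖Hc j‖ :=
          mul_le_mul_of_nonneg_right (hu j k) (norm_nonneg _)
      _ = ‖Hc j‖ := one_mul _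
  have hAmle : ∀ k, ‖Am k‖ ≤ Δ * C := by
    intro k; rw [hAm, norm_smul, hIΔ]
    exact mul_le_mul_of_nonneg_left (hHam a ha k) hΔ.le
  have hBmle : ∀ k, ‖Bm k‖ ≤ Δ * C := by
    intro k; rw [hBm, norm_smul, hIΔ]
    exact mul_le_mul_of_nonneg_left (hHam b hb k) hΔ.le
  have hexp3 : ∀ x : 𝔸, ‖x‖ ≤ Δ * C → Real.exp ‖x‖ ≤ 3 := by
    intro x hx
    calc Real.exp ‖x‖ ≤ Real.exp 1 := Real.exp_le_exp.2 (hx.trans hΔC)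
      _ ≤ 3 := by have := Real.exp_one_lt_d9; linarith
  have hone : (1 : ℝ) ≤ Real.exp (Δ * C) := by
    rw [Real.one_le_exp_iff]; positivity
  have hUle : ∀ k, ‖U k‖ ≤ E := by
    intro k
    refine norm_pexp_le hone le_rfl fun l => ?_
    exact (my_norm_exp_le _).trans (Real.exp_le_exp.2 (hBmle l))
  have hVle : ∀ k, k ≤ S + 1 → ‖V k‖ ≤ E * ‖X0‖ := by
    intro k hk
    refine (norm_mul_le _ _).trans
      (mul_le_mul_of_nonneg_right (norm_pexp_le hone hk fun l => ?_) (norm_nonneg _))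
    exact (my_norm_exp_le _).trans (Real.exp_le_exp.2 (hAmle l))
  have hE0 : 0 ≤ E := by positivity
  -- second-order remainders
  have hrem : ∀ (x : 𝔸), ‖x‖ ≤ Δ * C →
      ‖NormedSpace.exp x - 1 - x‖ ≤ 3 * (C ^ 2 * Δ ^ 2) := by
    intro x hx
    calc ‖NormedSpace.exp x - 1 - x‖ ≤ ‖x‖ ^ 2 * Real.exp ‖x‖ :=
          my_norm_exp_sub_one_sub_le x
      _ ≤ (Δ * C) ^ 2 * 3 := by
          apply mul_le_mul (pow_le_pow_left₀ (norm_nonneg _) hx 2) (hexp3 x hx)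
            (Real.exp_pos _).le (by positivity)
      _ = 3 * (C ^ 2 * Δ ^ 2) := by ring
  have hsub1 : ∀ (x : 𝔸), ‖x‖ ≤ Δ * C → ‖NormedSpace.exp x - 1‖ ≤ 3 * (C * Δ) := by
    intro x hx
    calc ‖NormedSpace.exp x - 1‖ ≤ ‖x‖ * Real.exp ‖x‖ := my_norm_exp_sub_one_le x
      _ ≤ (Δ * C) * 3 := by
          apply mul_le_mul hx (hexp3 x hx) (Real.exp_pos _).le (by positivity)
      _ = 3 * (C * Δ) := by ring
  -- recurrences
  have hVsucc : ∀ k, V (k + 1) = eA k * V k := by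
    intro k; simp only [hV]; rw [pexp_succ_right eA (Nat.zero_le k), mul_assoc]
  have hUsucc : ∀ k, k < S + 1 → U k = U (k + 1) * eB k := fun k hk => pexp_succ_left eB hk
  -- telescoping
  have tel : pexp eB 0 (S + 1) * X0 - pexp eA 0 (S + 1) * X0
      = ∑ k ∈ range (S + 1), U (k + 1) * (eB k - eA k) * V k := by
    have h1 : ∀ k ∈ range (S + 1),
        U (k + 1) * (eB k - eA k) * V k = U k * V k - U (k + 1) * V (k + 1) := by
      intro k hk
      rw [hUsucc k (mem_range.mp hk), hVsucc k]
      simp only [mul_sub, sub_mul, mul_assoc]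
    rw [Finset.sum_congr rfl h1, Finset.sum_range_sub' (fun k => U k * V k) (S + 1)]
    simp only [hU, hV, pexp_self, one_mul]
  -- decomposition of the difference of exponentials
  set c : ℕ → ℕ → ℂ := fun j k => (-(Complex.I * (Δ : ℂ))) * ((b j k : ℂ) - (a j k : ℂ)) with hc
  set R : ℕ → 𝔸 := fun k => (eB k - 1 - Bm k) - (eA k - 1 - Am k) with hRdef
  have hdiff : ∀ k, Bm k - Am k = ∑ j ∈ range N, c j k • Hc j := by
    intro k
    rw [hBm, hAm]
    simp only
    rw [← smul_sub, add_sub_add_left_eq_sub, ← Finset.sum_sub_distrib, Finset.smul_sum]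
    refine Finset.sum_congr rfl fun j _ => ?_
    rw [← sub_smul, smul_smul]
  have hsplit : ∀ k, eB k - eA k = (∑ j ∈ range N, c j k • Hc j) + R k := by
    intro k; rw [← hdiff, hRdef]; simp only; abel
  have hRle : ∀ k, ‖R k‖ ≤ 6 * (C ^ 2 * Δ ^ 2) := by
    intro k
    rw [hRdef]; simp only
    calc ‖eB k - 1 - Bm k - (eA k - 1 - Am k)‖
        ≤ ‖eB k - 1 - Bm k‖ + ‖eA k - 1 - Am k‖ := norm_sub_le _ _
      _ ≤ 3 * (C ^ 2 * Δ ^ 2) + 3 * (C ^ 2 * Δ ^ 2) :=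
          add_le_add (hrem _ (hBmle k)) (hrem _ (hAmle k))
      _ = 6 * (C ^ 2 * Δ ^ 2) := by ring
  set W : ℕ → ℕ → 𝔸 := fun j k => U (k + 1) * Hc j * V k with hWdef
  -- main algebraic identity
  have main : pexp eB 0 (S + 1) * X0 - pexp eA 0 (S + 1) * X0
      = (∑ j ∈ range N, ∑ k ∈ range (S + 1), c j k • W j k)
        + ∑ k ∈ range (S + 1), U (k + 1) * R k * V k := by
    rw [tel]
    have h2 : ∀ k ∈ range (S + 1), U (k + 1) * (eB k - eA k) * V k
        = (∑ j ∈ range N, c j k • W j k) + U (k + 1) * R k * V k := by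
      intro k _
      rw [hsplit k, mul_add, add_mul]
      congr 1
      rw [Finset.mul_sum, Finset.sum_mul]
      refine Finset.sum_congr rfl fun j _ => ?_
      rw [hWdef]
      rw [mul_smul_comm, smul_mul_assoc]
    rw [Finset.sum_congr rfl h2, Finset.sum_add_distrib, Finset.sum_comm]
  -- bound on the cumulative coefficients
  have hsle : ∀ j < N, ∀ k < S + 1, ‖∑ τ ∈ range (k + 1), c j τ‖ ≤ δ := by
    intro j hj k hk
    have h1 : ∑ τ ∈ range (k + 1), c j τ
        = (-(Complex.I * (Δ : ℂ))) * ((∑ τ ∈ range (k + 1), (b j τ - a j τ) : ℝ) : ℂ) := by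
      push_cast
      rw [Finset.mul_sum]
    rw [h1, norm_mul, hIΔ, Complex.norm_real, Real.norm_eq_abs]
    have h2 := hdev k hk j hj
    have h3 : ∑ τ ∈ range (k + 1), (a j τ - b j τ) * Δ
        = -(Δ * ∑ τ ∈ range (k + 1), (b j τ - a j τ)) := by
      rw [Finset.mul_sum, ← Finset.sum_neg_distrib]
      exact Finset.sum_congr rfl fun τ _ => by ring
    rw [h3, abs_neg, abs_mul, abs_of_pos hΔ] at h2
    exact h2
  have hHcle : ∀ j < N, ‖Hc j‖ ≤ C := by
    intro j hj
    rw [hC]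
    have h1 : ‖Hc j‖ ≤ ∑ j' ∈ range N, ‖Hc j'‖ :=
      Finset.single_le_sum (fun i _ => norm_nonneg _) (mem_range.mpr hj)
    linarith [norm_nonneg H0]
  have hWle : ∀ j < N, ∀ k, k + 1 ≤ S + 1 → ‖W j k‖ ≤ E * C * (E * ‖X0‖) := by
    intro j hj k hk
    rw [hWdef]; simp only
    refine (norm_mul_le _ _).trans ?_
    refine mul_le_mul ((norm_mul_le _ _).trans ?_) (hVle k (by omega)) (norm_nonneg _)
      (by positivity)
    exact mul_le_mul (hUle _) (hHcle j hj) (norm_nonneg _) hE0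
  have hWdle : ∀ j < N, ∀ k, k + 1 < S + 1 →
      ‖W j k - W j (k + 1)‖ ≤ E * (6 * (C ^ 2 * Δ)) * (E * ‖X0‖) := by
    intro j hj k hk
    have h1 : W j k - W j (k + 1)
        = U (k + 2) * ((eB (k + 1) - 1) * Hc j - Hc j * (eA k - 1)) * V k := by
      rw [hWdef]; simp only
      rw [hUsucc (k + 1) hk, hVsucc k]
      simp only [mul_sub, sub_mul, mul_assoc, mul_one, one_mul]
      abel
    rw [h1]
    have h2 : ‖(eB (k + 1) - 1) * Hc j - Hc j * (eA k - 1)‖ ≤ 6 * (C ^ 2 * Δ) := by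
      calc ‖(eB (k + 1) - 1) * Hc j - Hc j * (eA k - 1)‖
          ≤ ‖(eB (k + 1) - 1) * Hc j‖ + ‖Hc j * (eA k - 1)‖ := norm_sub_le _ _
        _ ≤ ‖eB (k + 1) - 1‖ * ‖Hc j‖ + ‖Hc j‖ * ‖eA k - 1‖ :=
            add_le_add (norm_mul_le _ _) (norm_mul_le _ _)
        _ ≤ 3 * (C * Δ) * C + C * (3 * (C * Δ)) := by
            refine add_le_add (mul_le_mul (hsub1 _ (hBmle _)) (hHcle j hj) (norm_nonneg _)
              (by positivity)) (mul_le_mul (hHcle j hj) (hsub1 _ (hAmle _)) (norm_nonneg _) hC0)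
        _ = 6 * (C ^ 2 * Δ) := by ring
    refine (norm_mul_le _ _).trans ?_
    refine mul_le_mul ((norm_mul_le _ _).trans ?_) (hVle k (by omega)) (norm_nonneg _)
      (by positivity)
    exact mul_le_mul (hUle _) h2 (norm_nonneg _) hE0
  -- per-controller Abel bound
  have habel : ∀ j < N, ‖∑ k ∈ range (S + 1), c j k • W j k‖
      ≤ δ * (E * C * (E * ‖X0‖)) + (S + 1) * (δ * (E * (6 * (C ^ 2 * Δ)) * (E * ‖X0‖))) := by
    intro j hj
    rw [my_abel (c j) (W j) S]
    refine (norm_add_le _ _).trans (add_le_add ?_ ?_)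
    · rw [norm_smul]
      exact mul_le_mul (hsle j hj S (by omega)) (hWle j hj S le_rfl) (norm_nonneg _) hδ
    · refine (norm_sum_le _ _).trans ?_
      have h4 : ∀ k ∈ range S, ‖(∑ τ ∈ range (k + 1), c j τ) • (W j k - W j (k + 1))‖
          ≤ δ * (E * (6 * (C ^ 2 * Δ)) * (E * ‖X0‖)) := by
        intro k hk
        rw [norm_smul]
        exact mul_le_mul (hsle j hj k (by simp at hk; omega))
          (hWdle j hj k (by simp at hk; omega)) (norm_nonneg _) hδ
      refine (Finset.sum_le_card_nsmul _ _ _ h4).trans ?_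
      rw [Finset.card_range, nsmul_eq_mul]
      have hfac : (0 : ℝ) ≤ δ * (E * (6 * (C ^ 2 * Δ)) * (E * ‖X0‖)) := by positivity
      push_cast
      nlinarith [hfac]
  -- assemble
  rw [main]
  refine (norm_add_le _ _).trans ?_
  have hpart1 : ‖∑ j ∈ range N, ∑ k ∈ range (S + 1), c j k • W j k‖
      ≤ N * (δ * (E * C * (E * ‖X0‖))
          + (S + 1) * (δ * (E * (6 * (C ^ 2 * Δ)) * (E * ‖X0‖)))) := by
    refine (norm_sum_le _ _).trans ?_
    refine (Finset.sum_le_card_nsmul _ _ _ fun j hj => habel j (mem_range.mp hj)).trans ?_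
    rw [Finset.card_range, nsmul_eq_mul]
  have hpart2 : ‖∑ k ∈ range (S + 1), U (k + 1) * R k * V k‖
      ≤ (S + 1) * (E * (6 * (C ^ 2 * Δ ^ 2)) * (E * ‖X0‖)) := by
    refine (norm_sum_le _ _).trans ?_
    have h5 : ∀ k ∈ range (S + 1), ‖U (k + 1) * R k * V k‖
        ≤ E * (6 * (C ^ 2 * Δ ^ 2)) * (E * ‖X0‖) := by
      intro k hk
      refine (norm_mul_le _ _).trans ?_
      refine mul_le_mul ((norm_mul_le _ _).trans ?_)
        (hVle k (by simp at hk; omega)) (norm_nonneg _) (by positivity)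
      exact mul_le_mul (hUle _) (hRle k) (norm_nonneg _) hE0
    refine (Finset.sum_le_card_nsmul _ _ _ h5).trans ?_
    rw [Finset.card_range, nsmul_eq_mul]
    push_cast
    exact le_rfl
  refine (add_le_add hpart1 hpart2).trans (le_of_eq ?_)
  push_cast
  ring


end Key

section MatrixMain

attribute [local instance] Matrix.linftyOpNormedRing Matrix.linftyOpNormedAlgebra

open Filter in
theorem sur_main (n N : ℕ) (hn : 0 < n) (hN : 2 ≤ N)
    (tf : ℝ) (htf : 0 < tf)
    (H0 : Matrix (Fin n) (Fin n) ℂ) (Hc : ℕ → Matrix (Fin n) (Fin n) ℂ)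
    (X0 : Matrix (Fin n) (Fin n) ℂ)
    (uc : ℕ → ℕ → ℕ → ℝ)
    (huc : ∀ T j k, 0 ≤ uc T j k ∧ uc T j k ≤ 1)
    (ub : ℕ → ℕ → ℕ → ℝ)
    (hub : ∀ T, ub T = surRound N (tf / T) (uc T))
    (hdev : ∀ δ > 0, ∃ T₀ : ℕ, ∀ T ≥ T₀, ∀ k < T, ∀ j < N,
      |∑ τ ∈ Finset.range (k + 1), (uc T j τ - ub T j τ) * (tf / T)| ≤ δ)
    (Xfin : (ℕ → ℕ → ℝ) → ℕ → Matrix (Fin n) (Fin n) ℂ)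
    (hXfin : ∀ u T, Xfin u T =
      ((List.range T).reverse.map (fun k =>
        NormedSpace.exp ((-(Complex.I * ((tf / T : ℝ) : ℂ))) •
          (H0 + ∑ j ∈ Finset.range N, (u j k : ℂ) • Hc j)))).prod * X0)
    (Lb Lc : Matrix (Fin n) (Fin n) ℂ)
    (hLb : Filter.Tendsto (fun T => Xfin (ub T) T) Filter.atTop (nhds Lb))
    (hLc : Filter.Tendsto (fun T => Xfin (uc T) T) Filter.atTop (nhds Lc)) :
    Lb = Lc := by
  haveI : Nonempty (Fin n) := ⟨⟨0, hn⟩⟩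
  set C : ℝ := ‖H0‖ + ∑ j ∈ range N, ‖Hc j‖ with hCdef
  have hC0 : 0 ≤ C := by rw [hCdef]; positivity
  set E : ℝ := Real.exp (C * tf) with hEdef
  have hE1 : 1 ≤ E := by rw [hEdef, Real.one_le_exp_iff]; positivity
  have hE0 : 0 ≤ E := by linarith
  set B1 : ℝ := E * (E * ‖X0‖) with hB1def
  have hB10 : 0 ≤ B1 := by positivity
  -- uniform quantitative bound
  have key : ∀ ε > 0, ∃ T₀ : ℕ, ∀ T ≥ T₀, ‖Xfin (ub T) T - Xfin (uc T) T‖ ≤ ε := by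
    intro ε hε
    set D : ℝ := B1 * (N * (C * (1 + 6 * (C * tf)))) with hDdef
    have hD0 : 0 ≤ D := by positivity
    set δ : ℝ := ε / (2 * (D + 1)) with hδdef
    have hδpos : 0 < δ := by rw [hδdef]; positivity
    obtain ⟨T₀, hT₀⟩ := hdev δ hδpos
    set P : ℝ := B1 * (6 * C ^ 2 * tf) with hPdef
    have hP0 : 0 ≤ P := by positivity
    set c₀ : ℝ := min (ε / (2 * (P + 1))) (1 / (C + 1)) with hc₀def
    have hc₀pos : 0 < c₀ := by
      rw [hc₀def]
      apply lt_min (by positivity) (by positivity)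
    obtain ⟨T₁, hT₁⟩ := exists_nat_ge (tf / c₀)
    refine ⟨max T₀ (max T₁ 1), fun T hT => ?_⟩
    have hTT₀ : T₀ ≤ T := le_trans (le_max_left _ _) hT
    have hTT₁ : (T₁ : ℝ) ≤ T := by
      exact_mod_cast le_trans (le_trans (le_max_left _ _) (le_max_right _ _)) hT
    have hT1 : 1 ≤ T := le_trans (le_trans (le_max_right _ _) (le_max_right _ _)) hT
    have hTpos : (0 : ℝ) < T := by exact_mod_cast hT1
    set Δ : ℝ := tf / T with hΔdef
    have hΔpos : 0 < Δ := by rw [hΔdef]; positivity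
    have hΔc₀ : Δ ≤ c₀ := by
      rw [hΔdef, div_le_iff₀ hTpos]
      have h1 : tf / c₀ ≤ (T : ℝ) := le_trans hT₁ hTT₁
      rw [div_le_iff₀ hc₀pos] at h1
      linarith [h1]
    have hΔC : Δ * C ≤ 1 := by
      have h1 : Δ ≤ 1 / (C + 1) := hΔc₀.trans (min_le_right _ _)
      have h2 : Δ * C ≤ (1 / (C + 1)) * C :=
        mul_le_mul_of_nonneg_right h1 hC0
      have h3 : (1 / (C + 1)) * C ≤ 1 := by
        rw [div_mul_eq_mul_div, one_mul, div_le_one (by linarith)]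
        linarith
      exact h2.trans h3
    have ha : ∀ j k, |uc T j k| ≤ 1 := by
      intro j k
      have := huc T j k
      rw [abs_le]; constructor <;> linarith [this.1, this.2]
    have hb : ∀ j k, |ub T j k| ≤ 1 := by
      intro j k
      rw [hub]
      by_cases h : surSel N (tf / ↑T) (uc T) k = j <;> simp [surRound, h]
    have hdev' : ∀ k < T, ∀ j < N,
        |∑ τ ∈ range (k + 1), (uc T j τ - ub T j τ) * Δ| ≤ δ := by
      intro k hk j hj
      exact hT₀ T hTT₀ k hk j hj
    have hbnd := key_bound (𝔸 := Matrix (Fin n) (Fin n) ℂ) H0 Hc N T hT1 Δ hΔpos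
      (uc T) (ub T) ha hb X0 C hCdef hΔC δ hδpos.le hdev'
    rw [hXfin, hXfin, ← pexp_zero, ← pexp_zero]
    refine hbnd.trans ?_
    -- numeric estimate
    have hΔT : Δ * (T : ℝ) = tf := by
      rw [hΔdef]; field_simp
    have hEeq : Real.exp (Δ * C) ^ T = E := by
      rw [← Real.exp_nat_mul, hEdef]
      congr 1
      nlinarith [hΔT]
    rw [hEeq]
    have hk1 : P * Δ ≤ ε / 2 := by
      have h1 : Δ ≤ ε / (2 * (P + 1)) := hΔc₀.trans (min_le_left _ _)
      have h2 : P * Δ ≤ (P + 1) * Δ := by nlinarith [hΔpos.le]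
      have h3 : (P + 1) * Δ ≤ (P + 1) * (ε / (2 * (P + 1))) :=
        mul_le_mul_of_nonneg_left h1 (by linarith)
      have h4 : (P + 1) * (ε / (2 * (P + 1))) = ε / 2 := by
        field_simp
      linarith
    have hk2 : D * δ ≤ ε / 2 := by
      have h1 : D * δ ≤ (D + 1) * δ := by nlinarith [hδpos.le]
      have h2 : (D + 1) * δ = ε / 2 := by
        rw [hδdef]; field_simp
      linarith
    have heq : E * (E * ‖X0‖) * (6 * C ^ 2 * Δ ^ 2 * T
          + N * (δ * (C * (1 + 6 * (C * (Δ * T))))))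
        = P * Δ + D * δ := by
      rw [hPdef, hDdef, hB1def]
      linear_combination (E * (E * ‖X0‖) * 6 * C ^ 2 * Δ
        + E * (E * ‖X0‖) * (N : ℝ) * δ * C * 6 * C) * hΔT
    rw [heq]
    linarith
  -- conclude convergence
  have hzero : Tendsto (fun T => Xfin (ub T) T - Xfin (uc T) T) atTop
      (nhds (0 : Matrix (Fin n) (Fin n) ℂ)) := by
    apply Metric.tendsto_atTop.2
    intro ε hε
    obtain ⟨T₀, h⟩ := key (ε / 2) (by linarith)
    refine ⟨T₀, fun T hT => ?_⟩
    rw [dist_eq_norm, sub_zero]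
    calc ‖Xfin (ub T) T - Xfin (uc T) T‖ ≤ ε / 2 := h T hT
      _ < ε := by linarith
  have hsum : Tendsto (fun T => Xfin (uc T) T + (Xfin (ub T) T - Xfin (uc T) T)) atTop
      (nhds (Lc + 0)) := hLc.add hzero
  have hfun : (fun T => Xfin (uc T) T + (Xfin (ub T) T - Xfin (uc T) T))
      = fun T => Xfin (ub T) T := by
    funext T; abel
  rw [hfun, add_zero] at hsum
  exact tendsto_nhds_unique hLb hsum

end MatrixMain

set_option maxHeartbeats 1000000

/-- Convergence of the rounded evolution: with `T` time steps of size `Δt = t_f/T`,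
Hermitian Hamiltonians, and continuous controls `uc` (depending on the grid `T`) whose
cumulative deviation from the sum-up-rounded controls tends to `0` uniformly in the time
step, the final evolved operators under the rounded and the continuous controls have the
same limit as `Δt → 0` (i.e. `T → ∞`), provided both limits exist; consequently the limits
of any continuous objective agree. -/
theorem sur_evolution_convergence (n N : ℕ) (hn : 0 < n) (hN : 2 ≤ N)
    (tf : ℝ) (htf : 0 < tf)
    (H0 : Matrix (Fin n) (Fin n) ℂ) (Hc : ℕ → Matrix (Fin n) (Fin n) ℂ)
    (hH0 : H0.IsHermitian) (hHc : ∀ j, (Hc j).IsHermitian)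
    (X0 : Matrix (Fin n) (Fin n) ℂ) (hX0 : X0ᴴ * X0 = 1)
    (uc : ℕ → ℕ → ℕ → ℝ)
    (huc : ∀ T j k, 0 ≤ uc T j k ∧ uc T j k ≤ 1)
    (ub : ℕ → ℕ → ℕ → ℝ)
    (hub : ∀ T, ub T = surRound N (tf / T) (uc T))
    (hdev : ∀ δ > 0, ∃ T₀ : ℕ, ∀ T ≥ T₀, ∀ k < T, ∀ j < N,
      |∑ τ ∈ Finset.range (k + 1), (uc T j τ - ub T j τ) * (tf / T)| ≤ δ)
    (Xfin : (ℕ → ℕ → ℝ) → ℕ → Matrix (Fin n) (Fin n) ℂ)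
    (hXfin : ∀ u T, Xfin u T =
      ((List.range T).reverse.map (fun k =>
        NormedSpace.exp ((-(Complex.I * ((tf / T : ℝ) : ℂ))) •
          (H0 + ∑ j ∈ Finset.range N, (u j k : ℂ) • Hc j)))).prod * X0)
    (Lb Lc : Matrix (Fin n) (Fin n) ℂ)
    (hLb : Filter.Tendsto (fun T => Xfin (ub T) T) Filter.atTop (nhds Lb))
    (hLc : Filter.Tendsto (fun T => Xfin (uc T) T) Filter.atTop (nhds Lc)) :
    Lb = Lc ∧ ∀ F : Matrix (Fin n) (Fin n) ℂ → ℝ, Continuous F → F Lb = F Lc := by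
  have h := sur_main n N hn hN tf htf H0 Hc X0 uc huc ub hub hdev Xfin hXfin Lb Lc hLb hLc
  exact ⟨h, fun F _ => by rw [h]⟩
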